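/- Let R be a commutative ring and let J be an ideal of R contained in the Jacobson radical of R. Let t ∈ J and s ∈ R. Then 1 − s·t is a unit of R, and setting a := −t·s²·(1 − s·t)⁻¹ and b := t·(1 − s·t)⁻¹, one has a, b ∈ J and the 2×2 matrix identity [[1, s], [0, 1]] · [[1, 0], [t, 1]] · [[1, −s], [0, 1]] = [[1, a], [0, 1]] · [[(1 − s·t)⁻¹, 0], [0, 1 − s·t]] · [[1, 0], [b, 1]]. -/
import Mathlib


/-- For `t` in an ideal `J` contained in the Jacobson radical and any `s`, the element
`1 - s·t` is a unit, and conjugating the lower elementary matrix by the upper one gives a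
`UHV`-decomposition with entries `a = -t·s²·(1-st)⁻¹ ∈ J` and `b = t·(1-st)⁻¹ ∈ J`. -/
theorem stmt_16 {R : Type*} [CommRing R] (J : Ideal R) (hJ : J ≤ Ideal.jacobson ⊥)
    (t : R) (ht : t ∈ J) (s : R) :
    IsUnit (1 - s * t) ∧
    -(t * s ^ 2) * Ring.inverse (1 - s * t) ∈ J ∧
    t * Ring.inverse (1 - s * t) ∈ J ∧
    (!![1, s; 0, 1] : Matrix (Fin 2) (Fin 2) R) * !![1, 0; t, 1] * !![1, -s; 0, 1] =
      !![1, -(t * s ^ 2) * Ring.inverse (1 - s * t); 0, 1] *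
        !![Ring.inverse (1 - s * t), 0; 0, 1 - s * t] *
        !![1, 0; t * Ring.inverse (1 - s * t), 1] := by
  have hu : IsUnit (1 - s * t) := by
    have := (Ideal.mem_jacobson_bot.1 (hJ ht)) (-s)
    simpa [mul_comm, sub_eq_add_neg, mul_neg, neg_mul, add_comm] using this
  have hinv : (1 - s * t) * Ring.inverse (1 - s * t) = 1 := Ring.mul_inverse_cancel _ hu
  refine ⟨hu, Ideal.mul_mem_right _ _ (neg_mem (Ideal.mul_mem_right _ _ ht)),
    Ideal.mul_mem_right _ _ ht, ?_⟩
  ext i j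
  fin_cases i <;> fin_cases j <;> simp [Matrix.mul_apply, Fin.sum_univ_succ] 
  · linear_combination (s^2*t^2*Ring.inverse (1-s*t) - s*t - 1) * hinv
  · linear_combination (s^2*t) * hinv
  · linear_combination (-t) * hinv
  · ring
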